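/- arXiv:2604.24556 — 8 statements merged into one kernel-verified Lean document; each statement's English description precedes it below -/
import Mathlib

section
/- Let G be a torsion abelian group and φ: G → G an endomorphism. Then φ is positively expansive if and only if φ is a factor of a unilateral Bernoulli shift; i.e., there exists a finite abelian group S and an epimorphism q: ⊕_{k∈ℕ} S → G with q ∘ σ = φ ∘ q, where σ is the unilateral shift. -/
/-- `S` is a positive generator for `φ`. -/
def IsPositiveGenerator {G : Type*} [AddCommGroup G] (φ : AddMonoid.End G)
    (S : AddSubgroup G) : Prop :=
  ∀ F : AddSubgroup G, (F : Set G).Finite →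
    ∃ n : ℕ, F ≤ ⨆ k ∈ Finset.range (n + 1), S.map (φ ^ k)

/-- `φ` is positively expansive: it has a finite positive generator. -/
def PositivelyExpansive {G : Type*} [AddCommGroup G] (φ : AddMonoid.End G) : Prop :=
  ∃ S : AddSubgroup G, (S : Set G).Finite ∧ IsPositiveGenerator φ S

theorem stmt7 {G : Type*} [AddCommGroup G] (hG : AddMonoid.IsTorsion G)
    (φ : AddMonoid.End G) :
    PositivelyExpansive φ ↔
      ∃ (S : Type) (inst : AddCommGroup S),
        haveI := inst
        Finite S ∧
          ∃ q : (ℕ →₀ S) →+ G, Function.Surjective q ∧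
            ∀ x : ℕ →₀ S, q (Finsupp.mapDomain (· + 1) x) = φ (q x) := by
  constructor
  · rintro ⟨S, hSfin, hgen⟩
    haveI : Finite S := hSfin.to_subtype
    let e : Shrink.{0} S ≃+ S :=
      { (equivShrink.{0} S).symm with map_add' := equivShrink_symm_add }
    let ψ : Shrink.{0} S →+ G := S.subtype.comp e.toAddMonoidHom
    let q : (ℕ →₀ Shrink.{0} S) →+ G :=
      Finsupp.liftAddHom (fun k => ((φ ^ k : AddMonoid.End G) : G →+ G).comp ψ)
    have hsingle : ∀ (k : ℕ) (s : Shrink.{0} S), q (Finsupp.single k s) = (φ ^ k) (ψ s) := by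
      intro k s; simp only [q, Finsupp.liftAddHom_apply_single, AddMonoidHom.comp_apply]; rfl
    have hcomm : ∀ x : ℕ →₀ Shrink.{0} S, q (Finsupp.mapDomain (· + 1) x) = φ (q x) := by
      intro x
      induction x using Finsupp.induction with
      | zero => simp
      | single_add a b f _ _ ih =>
          rw [Finsupp.mapDomain_add, map_add, map_add, map_add, ih,
            Finsupp.mapDomain_single, hsingle, hsingle, pow_succ']
          rfl
    refine ⟨Shrink.{0} S, inferInstance, Finite.of_equiv _ e.symm.toEquiv, q, ?_, hcomm⟩
    intro g
    obtain ⟨n, hn⟩ := hgen (AddSubgroup.zmultiples g) (hG g).finite_zmultiples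
    have hg : g ∈ ⨆ k ∈ Finset.range (n + 1), S.map (φ ^ k) :=
      hn (AddSubgroup.mem_zmultiples g)
    have hle : (⨆ k ∈ Finset.range (n + 1), S.map (φ ^ k)) ≤ q.range := by
      refine iSup₂_le fun k _ => ?_
      rintro x hx
      obtain ⟨s, hs, rfl⟩ := AddSubgroup.mem_map.1 hx
      refine ⟨Finsupp.single k (e.symm ⟨s, hs⟩), ?_⟩
      rw [hsingle]
      simp only [ψ, AddMonoidHom.comp_apply, AddMonoidHom.coe_comp, Function.comp_apply]
      rw [show e.toAddMonoidHom (e.symm ⟨s, hs⟩) = ⟨s, hs⟩ from e.apply_symm_apply _]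
      rfl
    exact hle hg
  · rintro ⟨S, inst, hfin, q, hq, hcomm⟩
    haveI := hfin
    let e : S →+ G := q.comp (Finsupp.singleAddHom 0)
    have hsingle : ∀ (k : ℕ) (s : S), q (Finsupp.single k s) = (φ ^ k) (e s) := by
      intro k
      induction k with
      | zero => intro s; simp [e]
      | succ k ih =>
          intro s
          have h : (Finsupp.single (k + 1) s : ℕ →₀ S)
              = Finsupp.mapDomain (· + 1) (Finsupp.single k s) := by
            simp [Finsupp.mapDomain_single]
          rw [h, hcomm, ih, pow_succ']
          rfl
    set T : AddSubgroup G := e.range with hT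
    have hTfin : (T : Set G).Finite := by
      simpa [hT] using Set.finite_range e
    refine ⟨T, hTfin, ?_⟩
    intro F hF
    set term : ℕ → AddSubgroup G := fun n => ⨆ k ∈ Finset.range (n + 1), T.map (φ ^ k)
      with hterm
    have hmono : Monotone term := by
      intro m n hmn
      exact biSup_mono fun k hk =>
        Finset.mem_range.2 (lt_of_lt_of_le (Finset.mem_range.1 hk) (by omega))
    have hdir : Directed (· ≤ ·) term := hmono.directed_le
    have hall : ∀ g : G, ∃ n, g ∈ term n := by
      intro g
      obtain ⟨x, rfl⟩ := hq g
      have hx : q x ∈ ⨆ n, term n := by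
        induction x using Finsupp.induction with
        | zero => rw [map_zero]; exact zero_mem _
        | single_add a b f _ _ ih =>
            rw [map_add]
            refine AddSubgroup.add_mem _ ?_ ih
            rw [hsingle]
            have h1 : (φ ^ a) (e b) ∈ T.map (φ ^ a) :=
              AddSubgroup.mem_map.2 ⟨e b, ⟨b, rfl⟩, rfl⟩
            have h2 : T.map (φ ^ a) ≤ term a :=
              le_iSup₂ (f := fun k (_ : k ∈ Finset.range (a + 1)) => T.map (φ ^ k)) a
                (Finset.mem_range.2 (by omega))
            exact le_iSup term a (h2 h1)
      exact (AddSubgroup.mem_iSup_of_directed hdir).1 hx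
    choose f hf using hall
    refine ⟨hF.toFinset.sup f, fun g hg => ?_⟩
    have hgF : g ∈ hF.toFinset := hF.mem_toFinset.2 hg
    exact hmono (Finset.le_sup hgF) (hf g)
end

section
/- Let G be a torsion abelian group with G = H + K for subgroups H, K ≤ G, and let φ: G → G be an endomorphism with φ(H) ⊆ H and φ(K) ⊆ K. If the restrictions φ|_H and φ|_K are positively expansive, then φ is positively expansive. -/
open Pointwise in
private lemma finite_closure_of_torsion {G : Type*} [AddCommGroup G]
    (hG : AddMonoid.IsTorsion G) {s : Set G} (hs : s.Finite) :
    ((AddSubgroup.closure s : AddSubgroup G) : Set G).Finite := by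
  have hfg : (AddSubgroup.closure s).FG := (AddSubgroup.fg_iff _).mpr ⟨s, rfl, hs⟩
  have h1 : AddGroup.FG (AddSubgroup.closure s) :=
    (AddGroup.fg_iff_addSubgroup_fg _).mpr hfg
  have h2 : Finite (AddSubgroup.closure s) :=
    AddCommGroup.finite_of_fg_torsion _ (fun h => (AddSubmonoid.isOfFinAddOrder_coe (x := h)).1 (hG ↑h))
  exact Set.finite_coe_iff.mp h2

set_option maxHeartbeats 1000000 in
open Pointwise in
theorem stmt9 {G : Type*} [AddCommGroup G] (hG : AddMonoid.IsTorsion G)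
    (H K : AddSubgroup G) (hHK : H ⊔ K = ⊤)
    (φ : AddMonoid.End G)
    (φH : AddMonoid.End H) (φK : AddMonoid.End K)
    (hφH : ∀ x : H, (φH x : G) = φ (x : G))
    (hφK : ∀ x : K, (φK x : G) = φ (x : G))
    (hH : PositivelyExpansive φH) (hK : PositivelyExpansive φK) :
    PositivelyExpansive φ := by
  classical
  have hTH : AddMonoid.IsTorsion H := fun h => (AddSubmonoid.isOfFinAddOrder_coe (x := h)).1 (hG ↑h)
  have hTK : AddMonoid.IsTorsion K := fun h => (AddSubmonoid.isOfFinAddOrder_coe (x := h)).1 (hG ↑h)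
  obtain ⟨SH, hSHfin, hSHgen⟩ := hH
  obtain ⟨SK, hSKfin, hSKgen⟩ := hK
  -- the candidate generator
  set S : AddSubgroup G := SH.map H.subtype ⊔ SK.map K.subtype with hS
  -- commuting of powers with subtype
  have hpowH : ∀ (k : ℕ) (x : H), ((φH ^ k) x : G) = (φ ^ k) (x : G) := by
    intro k
    induction k with
    | zero => intro x; simp
    | succ k ih =>
      intro x
      rw [pow_succ', pow_succ']
      have : (φH ^ k) (φH x) = (φH ^ k * φH) x := rfl
      calc ((φH * φH ^ k) x : G) = (φH ((φH ^ k) x) : G) := rfl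
        _ = φ (((φH ^ k) x : G)) := hφH _
        _ = φ ((φ ^ k) (x : G)) := by rw [ih]
        _ = (φ * φ ^ k) (x : G) := rfl
  have hpowK : ∀ (k : ℕ) (x : K), ((φK ^ k) x : G) = (φ ^ k) (x : G) := by
    intro k
    induction k with
    | zero => intro x; simp
    | succ k ih =>
      intro x
      rw [pow_succ', pow_succ']
      calc ((φK * φK ^ k) x : G) = (φK ((φK ^ k) x) : G) := rfl
        _ = φ (((φK ^ k) x : G)) := hφK _
        _ = φ ((φ ^ k) (x : G)) := by rw [ih]
        _ = (φ * φ ^ k) (x : G) := rfl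
  have hmapH : ∀ k : ℕ, (SH.map (φH ^ k)).map H.subtype = (SH.map H.subtype).map (φ ^ k) := by
    intro k
    erw [AddSubgroup.map_map, AddSubgroup.map_map]
    congr 1
    ext x
    exact hpowH k x
  have hmapK : ∀ k : ℕ, (SK.map (φK ^ k)).map K.subtype = (SK.map K.subtype).map (φ ^ k) := by
    intro k
    erw [AddSubgroup.map_map, AddSubgroup.map_map]
    congr 1
    ext x
    exact hpowK k x
  -- decomposition of elements of G
  have hdec : ∀ g : G, ∃ p : H × K, (p.1 : G) + (p.2 : G) = g := by
    intro g
    have hg : g ∈ H ⊔ K := by rw [hHK]; trivial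
    obtain ⟨y, hy, z, hz, hyz⟩ := AddSubgroup.mem_sup.mp hg
    exact ⟨(⟨y, hy⟩, ⟨z, hz⟩), hyz⟩
  choose p hp using hdec
  refine ⟨S, ?_, ?_⟩
  · -- finiteness of S
    have : ((S : Set G)) = (SH.map H.subtype : Set G) + (SK.map K.subtype : Set G) :=
      AddSubgroup.add_normal _ _
    rw [this]
    exact Set.Finite.add (hSHfin.image _) (hSKfin.image _)
  · intro F hF
    -- components of F
    set FH : AddSubgroup H := AddSubgroup.closure ((fun g => (p g).1) '' (F : Set G)) with hFH
    set FK : AddSubgroup K := AddSubgroup.closure ((fun g => (p g).2) '' (F : Set G)) with hFK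
    have hFHfin : ((FH : Set H)).Finite := by
      rw [hFH]
      exact finite_closure_of_torsion hTH (hF.image _)
    have hFKfin : ((FK : Set K)).Finite := by
      rw [hFK]
      exact finite_closure_of_torsion hTK (hF.image _)
    obtain ⟨nH, hnH⟩ := hSHgen FH hFHfin
    obtain ⟨nK, hnK⟩ := hSKgen FK hFKfin
    refine ⟨max nH nK, ?_⟩
    intro g hg
    have hgd := hp g
    have h1 : ((p g).1 : G) ∈ ⨆ k ∈ Finset.range (max nH nK + 1), S.map (φ ^ k) := by
      have hm : (p g).1 ∈ FH := AddSubgroup.subset_closure ⟨g, hg, rfl⟩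
      have := hnH hm
      have h2 : ((p g).1 : G) ∈ (⨆ k ∈ Finset.range (nH + 1), SH.map (φH ^ k)).map H.subtype :=
        AddSubgroup.mem_map_of_mem _ this
      rw [AddSubgroup.map_iSup] at h2
      simp only [AddSubgroup.map_iSup] at h2
      refine SetLike.le_def.mp ?_ h2
      refine iSup_le fun k => iSup_le fun hk => ?_
      rw [hmapH k]
      have hk' : k ∈ Finset.range (max nH nK + 1) := by
        simp only [Finset.mem_range] at hk ⊢
        omega
      refine le_trans ?_ (le_iSup₂ (f := fun k (_ : k ∈ Finset.range (max nH nK + 1)) => S.map (φ ^ k)) k hk')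
      exact AddSubgroup.map_mono le_sup_left
    have h2 : ((p g).2 : G) ∈ ⨆ k ∈ Finset.range (max nH nK + 1), S.map (φ ^ k) := by
      have hm : (p g).2 ∈ FK := AddSubgroup.subset_closure ⟨g, hg, rfl⟩
      have := hnK hm
      have h2 : ((p g).2 : G) ∈ (⨆ k ∈ Finset.range (nK + 1), SK.map (φK ^ k)).map K.subtype :=
        AddSubgroup.mem_map_of_mem _ this
      simp only [AddSubgroup.map_iSup] at h2
      refine SetLike.le_def.mp ?_ h2
      refine iSup_le fun k => iSup_le fun hk => ?_
      rw [hmapK k]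
      have hk' : k ∈ Finset.range (max nH nK + 1) := by
        simp only [Finset.mem_range] at hk ⊢
        omega
      refine le_trans ?_ (le_iSup₂ (f := fun k (_ : k ∈ Finset.range (max nH nK + 1)) => S.map (φ ^ k)) k hk')
      exact AddSubgroup.map_mono le_sup_right
    have := add_mem h1 h2
    rwa [hgd] at this
end

section
/- Let φ: G → G be an endomorphism of a torsion abelian group G and H ≤ G a φ-invariant subgroup (φ(H) ⊆ H). If the restriction φ|_H: H → H and the induced endomorphism φ̃: G/H → G/H are both positively expansive, then φ is positively expansive. -/
/-- In a torsion abelian group, the closure of a finite set is finite. -/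
lemma closure_finite_of_torsion {G : Type*} [AddCommGroup G] (hG : AddMonoid.IsTorsion G)
    {A : Set G} (hA : A.Finite) : ((AddSubgroup.closure A : Set G)).Finite := by
  have hfg : (AddSubgroup.closure A).FG := ⟨hA.toFinset, by simp⟩
  haveI : AddGroup.FG (AddSubgroup.closure A) := (AddGroup.fg_iff_addSubgroup_fg _).mpr hfg
  have : Finite (AddSubgroup.closure A) :=
    AddCommGroup.finite_of_fg_torsion _ (IsTorsion.addSubgroup hG _)
  exact Set.toFinite _

theorem stmt10 {G : Type*} [AddCommGroup G] (hG : AddMonoid.IsTorsion G)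
    (H : AddSubgroup G) (φ : AddMonoid.End G)
    (φH : AddMonoid.End H) (φQ : AddMonoid.End (G ⧸ H))
    (hφH : ∀ x : H, (φH x : G) = φ (x : G))
    (hφQ : ∀ g : G, φQ (QuotientAddGroup.mk g) = QuotientAddGroup.mk (φ g))
    (hH : PositivelyExpansive φH) (hQ : PositivelyExpansive φQ) :
    PositivelyExpansive φ := by
  classical
  obtain ⟨SH, hSHfin, hSHgen⟩ := hH
  obtain ⟨SQ, hSQfin, hSQgen⟩ := hQ
  set π : G →+ G ⧸ H := QuotientAddGroup.mk' H with hπdef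
  have hπ : ∀ g : G, π g = QuotientAddGroup.mk g := fun g => rfl
  -- commutation of powers
  have hpowQ : ∀ (k : ℕ) (g : G), (φQ ^ k) (π g) = π ((φ ^ k) g) := by
    intro k
    induction k with
    | zero => intro g; rfl
    | succ k ih =>
        intro g
        have h1 : (φQ ^ (k + 1)) (π g) = (φQ ^ k) (φQ (π g)) := by
          rw [pow_succ]; rfl
        have h2 : ((φ : AddMonoid.End G) ^ (k + 1)) g = (φ ^ k) (φ g) := by
          rw [pow_succ]; rfl
        rw [h1, h2, hπ, hφQ, ← hπ, ih]
  have hpowH : ∀ (k : ℕ) (x : H), (((φH ^ k) x : H) : G) = (φ ^ k) (x : G) := by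
    intro k
    induction k with
    | zero => intro x; rfl
    | succ k ih =>
        intro x
        have h1 : ((φH ^ (k + 1)) x) = (φH ^ k) (φH x) := by rw [pow_succ]; rfl
        have h2 : ((φ : AddMonoid.End G) ^ (k + 1)) (x : G) = (φ ^ k) (φ (x : G)) := by
          rw [pow_succ]; rfl
        rw [h1, h2, ih, hφH]
  -- lift of SQ
  set Tset : Set G := Quotient.out '' (SQ : Set (G ⧸ H)) with hTsetdef
  have hTsetfin : Tset.Finite := hSQfin.image _
  set T : AddSubgroup G := AddSubgroup.closure Tset with hTdef
  have hTfin : (T : Set G).Finite := closure_finite_of_torsion hG hTsetfin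
  have hπT : ∀ q ∈ SQ, ∃ t ∈ T, π t = q := by
    intro q hq
    exact ⟨Quotient.out q, AddSubgroup.subset_closure ⟨q, hq, rfl⟩, Quotient.out_eq q⟩
  set SHG : AddSubgroup G := SH.map H.subtype with hSHGdef
  have hSHGfin : (SHG : Set G).Finite := by
    rw [hSHGdef, AddSubgroup.coe_map]; exact hSHfin.image _
  set S : AddSubgroup G := AddSubgroup.closure ((SHG : Set G) ∪ Tset) with hSdef
  have hSfin : (S : Set G).Finite := closure_finite_of_torsion hG (hSHGfin.union hTsetfin)
  have hTS : T ≤ S := AddSubgroup.closure_mono Set.subset_union_right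
  have hSHS : SHG ≤ S := fun x hx =>
    AddSubgroup.subset_closure (Set.mem_union_left _ hx)
  refine ⟨S, hSfin, ?_⟩
  intro F hF
  -- image of F in the quotient
  have hFQfin : ((F.map π : AddSubgroup (G ⧸ H)) : Set (G ⧸ H)).Finite := by
    rw [AddSubgroup.coe_map]; exact hF.image _
  obtain ⟨n, hn⟩ := hSQgen (F.map π) hFQfin
  set W : AddSubgroup G := ⨆ k ∈ Finset.range (n + 1), T.map (φ ^ k) with hWdef
  have hWfin : (W : Set G).Finite := by
    have hsub : W ≤ AddSubgroup.closure
        (⋃ k ∈ Finset.range (n + 1), ((T.map (φ ^ k)) : Set G)) := by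
      refine iSup₂_le fun k hk => fun x hx => ?_
      exact AddSubgroup.subset_closure (Set.mem_biUnion hk hx)
    refine Set.Finite.subset (closure_finite_of_torsion hG ?_) hsub
    exact Set.Finite.biUnion (Finset.finite_toSet _)
      fun k _ => (hTfin.image (φ ^ k)).subset (fun x hx => by obtain ⟨t, ht, rfl⟩ := hx; exact ⟨t, ht, rfl⟩)
  -- the quotient sup is contained in the image of W
  have hsupQ : (⨆ k ∈ Finset.range (n + 1), SQ.map (φQ ^ k)) ≤ W.map π := by
    refine iSup₂_le fun k hk => ?_
    rintro _ ⟨q, hq, rfl⟩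
    obtain ⟨t, htT, hqt⟩ := hπT q hq
    refine ⟨(φ ^ k) t, ?_, ?_⟩
    · exact (le_iSup₂ (f := fun k (_ : k ∈ Finset.range (n + 1)) => T.map (φ ^ k)) k hk)
        ⟨t, htT, rfl⟩
    · rw [← hpowQ k t, hqt]; rfl
  -- finite subgroup of H
  set FW : AddSubgroup G := AddSubgroup.closure ((F : Set G) ∪ (W : Set G)) with hFWdef
  have hFWfin : (FW : Set G).Finite := closure_finite_of_torsion hG (hF.union hWfin)
  set K : AddSubgroup H := FW.addSubgroupOf H with hKdef
  have hKfin : (K : Set H).Finite := by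
    have : (K : Set H) = (Subtype.val : H → G) ⁻¹' (FW : Set G) := rfl
    rw [this]
    exact Set.Finite.preimage (Set.injOn_of_injective Subtype.coe_injective) hFWfin
  obtain ⟨m, hm⟩ := hSHgen K hKfin
  refine ⟨max n m, ?_⟩
  set Big : AddSubgroup G := ⨆ k ∈ Finset.range (max n m + 1), S.map (φ ^ k) with hBigdef
  have hle : ∀ k, k ≤ max n m → S.map (φ ^ k) ≤ Big := by
    intro k hk
    exact le_iSup₂ (f := fun k (_ : k ∈ Finset.range (max n m + 1)) => S.map (φ ^ k)) k
      (Finset.mem_range.mpr (by omega))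
  have hWBig : W ≤ Big := by
    refine iSup₂_le fun k hk => ?_
    refine le_trans (AddSubgroup.map_mono hTS) (hle k ?_)
    have := Finset.mem_range.mp hk; omega
  intro f hf
  have hπfW : π f ∈ W.map π := hsupQ (hn (AddSubgroup.mem_map_of_mem π hf))
  obtain ⟨w, hwW, hwf⟩ := hπfW
  have hfwH : f - w ∈ H := by
    have : π (f - w) = 0 := by rw [map_sub, hwf, sub_self]
    rwa [hπ, QuotientAddGroup.eq_zero_iff] at this
  have hfwFW : f - w ∈ FW :=
    sub_mem (AddSubgroup.subset_closure (Set.mem_union_left _ hf))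
      (AddSubgroup.subset_closure (Set.mem_union_right _ hwW))
  have hK : (⟨f - w, hfwH⟩ : H) ∈ K := hfwFW
  have hmem := hm hK
  have hHBig : ∀ x : H,
      x ∈ (⨆ k ∈ Finset.range (m + 1), SH.map (φH ^ k)) → (x : G) ∈ Big := by
    intro x hx
    have hcomap : (⨆ k ∈ Finset.range (m + 1), SH.map (φH ^ k)) ≤ Big.comap H.subtype := by
      refine iSup₂_le fun k hk => ?_
      rintro _ ⟨s, hs, rfl⟩
      simp only [AddSubgroup.mem_comap]
      have h1 : (H.subtype ((φH ^ k) s) : G) = (φ ^ k) (s : G) := hpowH k s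
      refine (congrArg (· ∈ Big) h1).mpr ?_
      have hsS : (s : G) ∈ S := hSHS ⟨s, hs, rfl⟩
      refine hle k ?_ ⟨(s : G), hsS, rfl⟩
      have := Finset.mem_range.mp hk; omega
    exact hcomap hx
  have h1 : f - w ∈ Big := hHBig _ hmem
  have h2 : w ∈ Big := hWBig hwW
  have h3 := add_mem h1 h2
  simpa using h3
end

section
/- Let φ: G → G be an endomorphism of an abelian group and n ≥ 1 a natural number. Then φ is positively expansive if and only if φ^n is positively expansive. -/
lemma sup_finite {G : Type*} [AddCommGroup G] {A B : AddSubgroup G}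
    (hA : (A : Set G).Finite) (hB : (B : Set G).Finite) : ((A ⊔ B : AddSubgroup G) : Set G).Finite := by
  rw [AddSubgroup.add_normal]
  exact hA.add hB

lemma biSup_finite {G : Type*} [AddCommGroup G] (s : Finset ℕ) (f : ℕ → AddSubgroup G)
    (hf : ∀ i ∈ s, ((f i : AddSubgroup G) : Set G).Finite) :
    ((⨆ i ∈ s, f i : AddSubgroup G) : Set G).Finite := by
  classical
  induction s using Finset.induction with
  | empty => simp
  | insert a s hx ih =>
    rw [Finset.iSup_insert]
    exact sup_finite (hf a (Finset.mem_insert_self a s))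
      (ih fun i hi => hf i (Finset.mem_insert_of_mem hi))

theorem stmt11 {G : Type*} [AddCommGroup G] (φ : AddMonoid.End G) (n : ℕ) (hn : 1 ≤ n) :
    PositivelyExpansive φ ↔ PositivelyExpansive (φ ^ n) := by
  constructor
  · rintro ⟨S, hSfin, hS⟩
    refine ⟨⨆ j ∈ Finset.range n, S.map (φ ^ j), ?_, ?_⟩
    · exact biSup_finite _ _ fun j _ => hSfin.image _
    · intro F hF
      obtain ⟨m, hm⟩ := hS F hF
      refine ⟨m, hm.trans ?_⟩
      refine iSup₂_le fun k hk => ?_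
      have hkm : k / n ∈ Finset.range (m + 1) := by
        rw [Finset.mem_range] at hk ⊢
        exact lt_of_le_of_lt (Nat.div_le_self k n) hk
      refine le_iSup₂_of_le (k / n) hkm ?_
      have hkeq : φ ^ k = ((φ ^ n) ^ (k / n)) * φ ^ (k % n) := by
        rw [← pow_mul, ← pow_add, Nat.div_add_mod]
      have : S.map (φ ^ k) = (S.map (φ ^ (k % n))).map ((φ ^ n) ^ (k / n)) := by
        rw [hkeq]; exact (AddSubgroup.map_map _ _ _).symm
      rw [this]
      refine AddSubgroup.map_mono ?_
      exact le_iSup₂_of_le (k % n) (Finset.mem_range.mpr (Nat.mod_lt _ hn)) le_rfl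
  · rintro ⟨S, hSfin, hS⟩
    refine ⟨S, hSfin, fun F hF => ?_⟩
    obtain ⟨m, hm⟩ := hS F hF
    refine ⟨n * m, hm.trans ?_⟩
    refine iSup₂_le fun k hk => ?_
    have hkm : n * k ∈ Finset.range (n * m + 1) := by
      rw [Finset.mem_range] at hk ⊢
      exact Nat.lt_succ_of_le (Nat.mul_le_mul_left n (Nat.lt_succ_iff.mp hk))
    refine le_iSup₂_of_le (n * k) hkm ?_
    rw [pow_mul]
end

section
/- Let φ: G → G be an automorphism of an abelian group and n ≥ 1 a natural number. Then φ is expansive if and only if φ^n is expansive; moreover, if S is a generator for φ^n, then ∑_{|k|≤n} φ^k(S) is a generator for φ. -/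
/-- `S` is a generator for the automorphism `φ`. -/
def IsGenerator {G : Type*} [AddCommGroup G] (φ : AddAut G) (S : AddSubgroup G) : Prop :=
  ∀ F : AddSubgroup G, (F : Set G).Finite →
    ∃ n : ℕ, F ≤ ⨆ k ∈ Finset.Icc (-(n : ℤ)) (n : ℤ), S.map (k • φ).toAddMonoidHom

/-- An automorphism `φ` is expansive if it has a finite generator. -/
def Expansive {G : Type*} [AddCommGroup G] (φ : AddAut G) : Prop :=
  ∃ S : AddSubgroup G, (S : Set G).Finite ∧ IsGenerator φ S

section Aux

variable {G : Type*} [AddCommGroup G]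

lemma aux_map_map (φ : AddAut G) (S : AddSubgroup G) (a b : ℤ) :
    (S.map ((a • φ)).toAddMonoidHom).map ((b • φ)).toAddMonoidHom
      = S.map (((b+a) • φ)).toAddMonoidHom := by
  rw [AddSubgroup.map_map]
  congr 1
  ext x
  simp [add_zsmul]

lemma aux_fin_sup (A B : AddSubgroup G) (hA : (A : Set G).Finite)
    (hB : (B : Set G).Finite) : ((A ⊔ B : AddSubgroup G) : Set G).Finite := by
  refine ((hA.prod hB).image (fun p : G × G => p.1 + p.2)).subset ?_
  intro x hx
  rw [SetLike.mem_coe, AddSubgroup.mem_sup] at hx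
  obtain ⟨a, ha, b, hb, rfl⟩ := hx
  exact ⟨(a, b), ⟨ha, hb⟩, rfl⟩

lemma aux_fin_biSup {ι : Type*} (s : Finset ι) (H : ι → AddSubgroup G)
    (h : ∀ i ∈ s, ((H i : Set G)).Finite) :
    ((⨆ i ∈ s, H i : AddSubgroup G) : Set G).Finite := by
  classical
  induction s using Finset.induction with
  | empty => simp
  | insert a s hni ih =>
    rw [Finset.iSup_insert]
    exact aux_fin_sup _ _ (h a (Finset.mem_insert_self a s))
      (ih fun i hi => h i (Finset.mem_insert_of_mem hi))

lemma aux_gen (φ : AddAut G) (n : ℕ) (S : AddSubgroup G)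
    (hgen : IsGenerator (n • φ) S) :
    IsGenerator φ (⨆ k ∈ Finset.Icc (-(n:ℤ)) (n:ℤ), S.map ((k • φ)).toAddMonoidHom) := by
  set T := ⨆ k ∈ Finset.Icc (-(n:ℤ)) (n:ℤ), S.map ((k • φ)).toAddMonoidHom with hT
  intro F hF
  obtain ⟨m, hm⟩ := hgen F hF
  refine ⟨n*m, hm.trans ?_⟩
  refine iSup₂_le fun j hj => ?_
  have hST : S ≤ T := by
    have h0 : (0:ℤ) ∈ Finset.Icc (-(n:ℤ)) (n:ℤ) := by
      simp
    have h1 : S.map (((0:ℤ) • φ)).toAddMonoidHom = S := by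
      ext x; simp
    have := le_iSup₂ (f := fun k (_ : k ∈ Finset.Icc (-(n:ℤ)) (n:ℤ)) =>
      S.map ((k • φ)).toAddMonoidHom) 0 h0
    rw [h1] at this
    exact this
  have hpow : (j • (n • φ : AddAut G)) = (((n:ℤ)*j) • φ) := by
    rw [← natCast_zsmul φ n, ← mul_zsmul']
  have hmem : (n:ℤ)*j ∈ Finset.Icc (-((n*m : ℕ):ℤ)) ((n*m : ℕ):ℤ) := by
    rw [Finset.mem_Icc] at hj ⊢
    push_cast
    constructor <;> nlinarith [hj.1, hj.2, Int.natCast_nonneg n]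
  calc S.map (j • (n • φ)).toAddMonoidHom
      = S.map ((((n:ℤ)*j) • φ)).toAddMonoidHom := by rw [hpow]
    _ ≤ T.map ((((n:ℤ)*j) • φ)).toAddMonoidHom := AddSubgroup.map_mono hST
    _ ≤ ⨆ k ∈ Finset.Icc (-((n*m : ℕ):ℤ)) ((n*m : ℕ):ℤ), T.map ((k • φ)).toAddMonoidHom :=
        le_iSup₂ (f := fun k (_ : k ∈ Finset.Icc (-((n*m:ℕ):ℤ)) ((n*m:ℕ):ℤ)) =>
          T.map ((k • φ)).toAddMonoidHom) _ hmem

lemma aux_fwd (φ : AddAut G) (n : ℕ) (hn : 1 ≤ n) (h : Expansive φ) :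
    Expansive (n • φ) := by
  obtain ⟨S, hS, hgen⟩ := h
  have hn' : (0:ℤ) < n := by exact_mod_cast hn
  refine ⟨⨆ k ∈ Finset.Icc (-(n:ℤ)) (n:ℤ), S.map ((k • φ)).toAddMonoidHom, ?_, ?_⟩
  · refine aux_fin_biSup _ _ fun k _ => ?_
    rw [AddSubgroup.coe_map]
    exact hS.image _
  · set T := ⨆ k ∈ Finset.Icc (-(n:ℤ)) (n:ℤ), S.map ((k • φ)).toAddMonoidHom with hT
    intro F hF
    obtain ⟨m, hm⟩ := hgen F hF
    refine ⟨m, hm.trans ?_⟩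
    refine iSup₂_le fun k hk => ?_
    set j : ℤ := k / (n:ℤ) with hj
    set r : ℤ := k % (n:ℤ) with hr
    have hkeq : (n:ℤ) * j + r = k := Int.mul_ediv_add_emod k n
    have hrmem : r ∈ Finset.Icc (-(n:ℤ)) (n:ℤ) := by
      rw [Finset.mem_Icc]
      have h1 : 0 ≤ r := Int.emod_nonneg k (by omega)
      have h2 : r < n := Int.emod_lt_of_pos k hn'
      omega
    have hjmem : j ∈ Finset.Icc (-(m:ℤ)) (m:ℤ) := by
      rw [Finset.mem_Icc] at hk ⊢
      constructor
      · have : (-(m:ℤ) * n) / n ≤ k / n := by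
          apply Int.ediv_le_ediv hn'
          nlinarith [hk.1, Int.natCast_nonneg m]
        rwa [Int.mul_ediv_cancel _ (by omega)] at this
      · have : k / n ≤ ((m:ℤ) * n) / n := by
          apply Int.ediv_le_ediv hn'
          nlinarith [hk.2, Int.natCast_nonneg m]
        rwa [Int.mul_ediv_cancel _ (by omega)] at this
    have hSr : S.map ((r • φ)).toAddMonoidHom ≤ T :=
      le_iSup₂ (f := fun k (_ : k ∈ Finset.Icc (-(n:ℤ)) (n:ℤ)) =>
        S.map ((k • φ)).toAddMonoidHom) r hrmem
    have hpow : (j • (n • φ : AddAut G)) = (((n:ℤ)*j) • φ) := by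
      rw [← natCast_zsmul φ n, ← mul_zsmul']
    calc S.map ((k • φ)).toAddMonoidHom
        = (S.map ((r • φ)).toAddMonoidHom).map ((((n:ℤ)*j) • φ)).toAddMonoidHom := by
          rw [aux_map_map, hkeq]
      _ ≤ T.map ((((n:ℤ)*j) • φ)).toAddMonoidHom := AddSubgroup.map_mono hSr
      _ = T.map (j • (n • φ)).toAddMonoidHom := by rw [hpow]
      _ ≤ ⨆ i ∈ Finset.Icc (-(m:ℤ)) (m:ℤ), T.map (i • (n • φ)).toAddMonoidHom :=
          le_iSup₂ (f := fun i (_ : i ∈ Finset.Icc (-(m:ℤ)) (m:ℤ)) =>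
            T.map (i • (n • φ)).toAddMonoidHom) j hjmem

end Aux

theorem stmt12 {G : Type*} [AddCommGroup G] (φ : AddAut G) (n : ℕ) (hn : 1 ≤ n) :
    (Expansive φ ↔ Expansive (n • φ)) ∧
      ∀ S : AddSubgroup G, (S : Set G).Finite → IsGenerator (n • φ) S →
        IsGenerator φ
          (⨆ k ∈ Finset.Icc (-(n : ℤ)) (n : ℤ), S.map ((k • φ).toAddMonoidHom)) := by
  refine ⟨⟨aux_fwd φ n hn, ?_⟩, fun S _ hgen => aux_gen φ n S hgen⟩
  rintro ⟨S, hS, hgen⟩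
  refine ⟨⨆ k ∈ Finset.Icc (-(n:ℤ)) (n:ℤ), S.map ((k • φ)).toAddMonoidHom, ?_,
    aux_gen φ n S hgen⟩
  refine aux_fin_biSup _ _ fun k _ => ?_
  rw [AddSubgroup.coe_map]
  exact hS.image _
end

section
/- Let φ: G → G be an endomorphism of an abelian group and let S ≤ G be a positive generator for φ. Then the algebraic entropy of φ satisfies h(φ) = h(φ, S), where h(φ) = sup over finite subgroups F ≤ G of h(φ, F). In particular, every positively expansive endomorphism has finite algebraic entropy. -/
/-- The `n`-th trajectory subgroup `∑_{k=0}^{n-1} φ^k(F)`. -/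
noncomputable def trajectory {G : Type*} [AddCommGroup G] (φ : AddMonoid.End G)
    (F : AddSubgroup G) (n : ℕ) : AddSubgroup G :=
  ⨆ k ∈ Finset.range n, F.map (φ ^ k)

/-- Algebraic entropy of `φ` relative to `F`:
`limsup_n (1/n) log |∑_{k=0}^{n-1} φ^k(F)|`. -/
noncomputable def entropyRel {G : Type*} [AddCommGroup G] (φ : AddMonoid.End G)
    (F : AddSubgroup G) : ℝ :=
  Filter.limsup (fun n : ℕ => Real.log (Nat.card (trajectory φ F n)) / n) Filter.atTop

/-- The algebraic entropy of `φ`: supremum of relative entropies over finite subgroups. -/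
noncomputable def entropy {G : Type*} [AddCommGroup G] (φ : AddMonoid.End G) : ℝ :=
  ⨆ F : {F : AddSubgroup G // (F : Set G).Finite}, entropyRel φ F.1

section Aux

open Filter Pointwise

variable {G : Type*} [AddCommGroup G] (φ : AddMonoid.End G)

lemma trajectory_eq_sup (F : AddSubgroup G) (n : ℕ) :
    trajectory φ F n = (Finset.range n).sup (fun k => F.map (φ ^ k)) :=
  (Finset.sup_eq_iSup _ _).symm

lemma trajectory_zero (F : AddSubgroup G) : trajectory φ F 0 = ⊥ := by
  simp [trajectory_eq_sup]

lemma trajectory_succ (F : AddSubgroup G) (n : ℕ) :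
    trajectory φ F (n + 1) = trajectory φ F n ⊔ F.map (φ ^ n) := by
  rw [trajectory_eq_sup, trajectory_eq_sup, Finset.range_add_one, Finset.sup_insert, sup_comm]

lemma trajectory_mono (F : AddSubgroup G) {m n : ℕ} (h : m ≤ n) :
    trajectory φ F m ≤ trajectory φ F n := by
  rw [trajectory_eq_sup, trajectory_eq_sup]
  exact Finset.sup_mono (Finset.range_subset_range.2 h)

lemma map_le_trajectory (F : AddSubgroup G) {k n : ℕ} (h : k < n) :
    F.map (φ ^ k) ≤ trajectory φ F n := by
  rw [trajectory_eq_sup]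
  exact Finset.le_sup (f := fun k => F.map (φ ^ k)) (Finset.mem_range.2 h)

lemma coe_sup_finite {A B : AddSubgroup G} (hA : (A : Set G).Finite)
    (hB : (B : Set G).Finite) : ((A ⊔ B : AddSubgroup G) : Set G).Finite := by
  rw [AddSubgroup.add_normal]
  exact hA.add hB

lemma card_sup_le (A B : AddSubgroup G) :
    Nat.card (A ⊔ B : AddSubgroup G) ≤ Nat.card A * Nat.card B := by
  have h : ((A ⊔ B : AddSubgroup G) : Set G) = (A : Set G) + (B : Set G) :=
    AddSubgroup.add_normal A B
  have h2 : Nat.card (A ⊔ B : AddSubgroup G) = Nat.card ((A : Set G) + (B : Set G)) := by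
    rw [← h]; rfl
  rw [h2]
  exact Set.natCard_add_le

lemma card_pos_of_finite {A : AddSubgroup G} (hA : (A : Set G).Finite) :
    0 < Nat.card A := by
  haveI : Finite A := hA.to_subtype
  exact Nat.card_pos

lemma trajectory_finite {S : AddSubgroup G} (hS : (S : Set G).Finite) (n : ℕ) :
    ((trajectory φ S n : AddSubgroup G) : Set G).Finite := by
  induction n with
  | zero => rw [trajectory_zero]; simp
  | succ n ih =>
      rw [trajectory_succ]
      exact coe_sup_finite ih (by exact hS.image _)

lemma card_map_le {S : AddSubgroup G} (hS : (S : Set G).Finite) (f : G →+ G) :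
    Nat.card (S.map f) ≤ Nat.card S := by
  have : Nat.card (S.map f) = Nat.card (f '' (S : Set G)) := by
    rw [← AddSubgroup.coe_map]; rfl
  rw [this]
  exact Nat.card_image_le hS

lemma card_trajectory_succ_le {S : AddSubgroup G} (hS : (S : Set G).Finite) (n : ℕ) :
    Nat.card (trajectory φ S (n + 1)) ≤ Nat.card (trajectory φ S n) * Nat.card S := by
  rw [trajectory_succ]
  exact (card_sup_le _ _).trans
    (Nat.mul_le_mul_left _ (card_map_le hS _))

lemma card_trajectory_add_le {S : AddSubgroup G} (hS : (S : Set G).Finite) (n m : ℕ) :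
    Nat.card (trajectory φ S (n + m)) ≤ Nat.card (trajectory φ S n) * (Nat.card S) ^ m := by
  induction m with
  | zero => simp
  | succ m ih =>
      calc Nat.card (trajectory φ S (n + (m + 1)))
          ≤ Nat.card (trajectory φ S (n + m)) * Nat.card S := by
            rw [show n + (m + 1) = n + m + 1 by ring]
            exact card_trajectory_succ_le φ hS _
        _ ≤ Nat.card (trajectory φ S n) * (Nat.card S) ^ m * Nat.card S :=
            Nat.mul_le_mul_right _ ih
        _ = Nat.card (trajectory φ S n) * (Nat.card S) ^ (m + 1) := by ring

lemma card_trajectory_le_pow {S : AddSubgroup G} (hS : (S : Set G).Finite) (n : ℕ) :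
    Nat.card (trajectory φ S n) ≤ (Nat.card S) ^ n := by
  have h := card_trajectory_add_le φ hS 0 n
  rwa [trajectory_zero, Nat.zero_add, AddSubgroup.card_bot, one_mul] at h

lemma map_trajectory_le {S : AddSubgroup G} (a k : ℕ) :
    (trajectory φ S a).map ((φ ^ k : AddMonoid.End G) : G →+ G) ≤ trajectory φ S (a + k) := by
  induction a with
  | zero => rw [trajectory_zero]; exact (AddSubgroup.map_bot _).le.trans bot_le
  | succ a ih =>
      rw [trajectory_succ]; erw [AddSubgroup.map_sup]
      apply sup_le
      · exact ih.trans (trajectory_mono φ S (by omega))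
      · erw [AddSubgroup.map_map]
        have hc : ((φ ^ k : AddMonoid.End G) : G →+ G).comp ((φ ^ a : AddMonoid.End G) : G →+ G)
            = ((φ ^ (k + a) : AddMonoid.End G) : G →+ G) := by
          ext x
          rw [pow_add]
          rfl
        rw [hc]
        exact map_le_trajectory φ S (by omega)

lemma trajectory_le_trajectory {S F : AddSubgroup G} {m : ℕ}
    (hm : F ≤ trajectory φ S (m + 1)) (n : ℕ) :
    trajectory φ F n ≤ trajectory φ S (n + m) := by
  induction n with
  | zero => rw [trajectory_zero]; exact bot_le
  | succ n ih =>
      rw [trajectory_succ]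
      apply sup_le
      · exact ih.trans (trajectory_mono φ S (by omega))
      · calc F.map (φ ^ n) ≤ (trajectory φ S (m + 1)).map (φ ^ n) :=
              AddSubgroup.map_mono hm
          _ ≤ trajectory φ S (m + 1 + n) := map_trajectory_le φ _ _
          _ ≤ trajectory φ S (n + 1 + m) := trajectory_mono φ S (by omega)

lemma log_nat_nonneg (k : ℕ) : 0 ≤ Real.log k := by
  rcases Nat.eq_zero_or_pos k with h | h
  · simp [h]
  · exact Real.log_nonneg (by exact_mod_cast h)

lemma f_nonneg (F : AddSubgroup G) (n : ℕ) :
    0 ≤ Real.log (Nat.card (trajectory φ F n)) / n :=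
  div_nonneg (log_nat_nonneg _) (Nat.cast_nonneg n)

lemma f_le_logS {S : AddSubgroup G} (hS : (S : Set G).Finite) (n : ℕ) :
    Real.log (Nat.card (trajectory φ S n)) / n ≤ Real.log (Nat.card S) := by
  have hc : 1 ≤ Nat.card S := card_pos_of_finite hS
  rcases Nat.eq_zero_or_pos n with h | h
  · simp [h]
    exact log_nat_nonneg _
  · have h1 : Real.log (Nat.card (trajectory φ S n)) ≤ n * Real.log (Nat.card S) := by
      calc Real.log (Nat.card (trajectory φ S n))
          ≤ Real.log ((Nat.card S : ℝ) ^ n) := by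
            apply Real.log_le_log
            · exact_mod_cast card_pos_of_finite (trajectory_finite φ hS n)
            · exact_mod_cast card_trajectory_le_pow φ hS n
        _ = n * Real.log (Nat.card S) := by rw [Real.log_pow]
    rw [div_le_iff₀ (by exact_mod_cast h)]
    linarith [h1]

lemma entropyRel_le {S : AddSubgroup G} (hS : (S : Set G).Finite)
    (hgen : IsPositiveGenerator φ S) (F : AddSubgroup G) (hF : (F : Set G).Finite) :
    entropyRel φ F ≤ entropyRel φ S := by
  obtain ⟨m, hm⟩ := hgen F hF
  have hm' : F ≤ trajectory φ S (m + 1) := hm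
  set fS : ℕ → ℝ := fun n => Real.log (Nat.card (trajectory φ S n)) / n with hfS
  set fF : ℕ → ℝ := fun n => Real.log (Nat.card (trajectory φ F n)) / n with hfF
  have hbddS : IsBoundedUnder (· ≤ ·) atTop fS :=
    isBoundedUnder_of ⟨Real.log (Nat.card S), fun n => f_le_logS φ hS n⟩
  have hcobF : IsCoboundedUnder (· ≤ ·) atTop fF :=
    IsBoundedUnder.isCoboundedUnder_le (isBoundedUnder_of ⟨0, fun n => f_nonneg φ F n⟩)
  apply le_of_forall_pos_le_add
  intro ε hε
  show limsup fF atTop ≤ entropyRel φ S + ε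
  apply Filter.limsup_le_of_le hcobF
  have eS : entropyRel φ S = limsup fS atTop := rfl
  have h1 : ∀ᶠ n in atTop, fS n < entropyRel φ S + ε / 2 :=
    eventually_lt_of_limsup_lt (by rw [← eS]; linarith) hbddS
  have h2 : ∀ᶠ n : ℕ in atTop,
      (m : ℝ) * Real.log (Nat.card S) / n ≤ ε / 2 :=
    (tendsto_const_div_atTop_nhds_zero_nat (m * Real.log (Nat.card S))).eventually
      (eventually_le_nhds (half_pos hε))
  filter_upwards [h1, h2, eventually_ge_atTop 1] with n hn1 hn2 hn3
  have hnpos : (0 : ℝ) < n := by exact_mod_cast hn3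
  have key : Nat.card (trajectory φ F n) ≤
      Nat.card (trajectory φ S n) * (Nat.card S) ^ m := by
    calc Nat.card (trajectory φ F n) ≤ Nat.card (trajectory φ S (n + m)) := by
          haveI : Finite (trajectory φ S (n + m)) := (trajectory_finite φ hS (n + m)).to_subtype
          exact AddSubgroup.card_le_of_le (trajectory_le_trajectory φ hm' n)
      _ ≤ Nat.card (trajectory φ S n) * (Nat.card S) ^ m :=
          card_trajectory_add_le φ hS n m
  have hposF : 0 < Nat.card (trajectory φ F n) := by
    apply card_pos_of_finite
    exact Set.Finite.subset (trajectory_finite φ hS (n + m))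
      (trajectory_le_trajectory φ hm' n)
  have hposS : 0 < Nat.card (trajectory φ S n) :=
    card_pos_of_finite (trajectory_finite φ hS n)
  have hlog : Real.log (Nat.card (trajectory φ F n)) ≤
      Real.log (Nat.card (trajectory φ S n)) + m * Real.log (Nat.card S) := by
    calc Real.log (Nat.card (trajectory φ F n))
        ≤ Real.log ((Nat.card (trajectory φ S n) : ℝ) * (Nat.card S : ℝ) ^ m) := by
          apply Real.log_le_log (by exact_mod_cast hposF)
          exact_mod_cast key
      _ = Real.log (Nat.card (trajectory φ S n)) + m * Real.log (Nat.card S) := by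
          rw [Real.log_mul (Nat.cast_ne_zero.2 hposS.ne')
            (pow_ne_zero m (Nat.cast_ne_zero.2 (card_pos_of_finite hS).ne')), Real.log_pow]
  have hfin : fF n ≤ fS n + (m : ℝ) * Real.log (Nat.card S) / n := by
    calc fF n = Real.log (Nat.card (trajectory φ F n)) / n := rfl
      _ ≤ (Real.log (Nat.card (trajectory φ S n)) + m * Real.log (Nat.card S)) / n := by
          apply div_le_div_of_nonneg_right hlog hnpos.le
      _ = Real.log (Nat.card (trajectory φ S n)) / n + m * Real.log (Nat.card S) / n := by
          ring
      _ = fS n + (m : ℝ) * Real.log (Nat.card S) / n := rfl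
  linarith

end Aux

theorem stmt15 {G : Type*} [AddCommGroup G] (φ : AddMonoid.End G) (S : AddSubgroup G)
    (hS : (S : Set G).Finite) (hgen : IsPositiveGenerator φ S) :
    entropy φ = entropyRel φ S := by
  haveI : Nonempty {F : AddSubgroup G // (F : Set G).Finite} := ⟨⟨S, hS⟩⟩
  apply le_antisymm
  · exact ciSup_le fun F => entropyRel_le φ hS hgen F.1 F.2
  · exact le_ciSup ⟨entropyRel φ S, by
      rintro x ⟨F, rfl⟩
      exact entropyRel_le φ hS hgen F.1 F.2⟩ (⟨S, hS⟩ : {F : AddSubgroup G // (F : Set G).Finite})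
end

section
/- Let G = ⊕_{n∈ℤ} G_n where G_n = ℤ for n < 0 and G_n = ℤ/2ℤ for n ≥ 0, and let φ: G → G be the shift-like map sending (g_n)_{n∈ℤ} to the sequence whose n-th coordinate is g_{n-1} for n ≠ 0 and π(g_{-1}) at coordinate 0, where π: ℤ → ℤ/2ℤ is the canonical projection. Then φ is a surjective endomorphism that is positively expansive (with positive generator the subgroup of sequences supported in coordinate 0), and G is infinite. -/
section aux

variable (φ : AddMonoid.End ((ℕ →₀ ℤ) × (ℕ →₀ ZMod 2)))
    (hφ1 : ∀ g : (ℕ →₀ ℤ) × (ℕ →₀ ZMod 2), ∀ j : ℕ, (φ g).1 j = g.1 (j + 1))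
    (hφ2 : ∀ g : (ℕ →₀ ℤ) × (ℕ →₀ ZMod 2), (φ g).2 0 = ((g.1 0 : ℤ) : ZMod 2))
    (hφ3 : ∀ g : (ℕ →₀ ℤ) × (ℕ →₀ ZMod 2), ∀ i : ℕ, (φ g).2 (i + 1) = g.2 i)

include hφ1 hφ2 hφ3 in
lemma phi_single (k : ℕ) (a : ZMod 2) :
    (φ ^ k) (0, Finsupp.single 0 a) = (0, Finsupp.single k a) := by
  induction k with
  | zero => simp
  | succ k ih =>
    have : (φ ^ (k+1)) (0, Finsupp.single 0 a) = φ ((0 : ℕ →₀ ℤ), Finsupp.single k a) := by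
      rw [pow_succ']; show φ ((φ ^ k) _) = _; rw [ih]
    rw [this]
    refine Prod.ext ?_ ?_
    · ext j; rw [hφ1]; simp
    · ext i
      cases i with
      | zero =>
        rw [hφ2]
        simp [Finsupp.single_apply, Nat.succ_ne_zero]
      | succ m =>
        rw [hφ3]
        simp only [Finsupp.single_apply]
        simp [Nat.succ_inj]

end aux

theorem stmt18
    (φ : AddMonoid.End ((ℕ →₀ ℤ) × (ℕ →₀ ZMod 2)))
    (hφ1 : ∀ g : (ℕ →₀ ℤ) × (ℕ →₀ ZMod 2), ∀ j : ℕ, (φ g).1 j = g.1 (j + 1))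
    (hφ2 : ∀ g : (ℕ →₀ ℤ) × (ℕ →₀ ZMod 2), (φ g).2 0 = ((g.1 0 : ℤ) : ZMod 2))
    (hφ3 : ∀ g : (ℕ →₀ ℤ) × (ℕ →₀ ZMod 2), ∀ i : ℕ, (φ g).2 (i + 1) = g.2 i) :
    Function.Surjective φ ∧
      (((AddSubgroup.prod (⊥ : AddSubgroup (ℕ →₀ ℤ))
            (Finsupp.singleAddHom 0 : ZMod 2 →+ (ℕ →₀ ZMod 2)).range :
              AddSubgroup ((ℕ →₀ ℤ) × (ℕ →₀ ZMod 2))) :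
          Set ((ℕ →₀ ℤ) × (ℕ →₀ ZMod 2))).Finite ∧
        IsPositiveGenerator φ
          (AddSubgroup.prod ⊥ (Finsupp.singleAddHom 0 : ZMod 2 →+ (ℕ →₀ ZMod 2)).range)) ∧
      Infinite ((ℕ →₀ ℤ) × (ℕ →₀ ZMod 2)) := by
  set S := AddSubgroup.prod (⊥ : AddSubgroup (ℕ →₀ ℤ))
      (Finsupp.singleAddHom 0 : ZMod 2 →+ (ℕ →₀ ZMod 2)).range with hS
  refine ⟨?_, ⟨?_, ?_⟩, inferInstance⟩
  · -- surjective
    intro h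
    refine ⟨(Finsupp.single 0 ((h.2 0).val : ℤ) + Finsupp.embDomain ⟨Nat.succ, Nat.succ_injective⟩ h.1,
      h.2.comapDomain Nat.succ (Nat.succ_injective.injOn)), ?_⟩
    refine Prod.ext ?_ ?_
    · ext j
      rw [hφ1]
      simp only [Finsupp.add_apply]
      rw [show j + 1 = (⟨Nat.succ, Nat.succ_injective⟩ : ℕ ↪ ℕ) j from rfl,
        Finsupp.embDomain_apply]
      simp [Finsupp.single_apply]
    · ext i
      cases i with
      | zero =>
        rw [hφ2]
        have h0 : ¬ (0 : ℕ) ∈ Set.range (⟨Nat.succ, Nat.succ_injective⟩ : ℕ ↪ ℕ) := by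
          rintro ⟨m, hm⟩; exact Nat.succ_ne_zero m hm
        rw [Finsupp.add_apply, Finsupp.single_eq_same,
          Finsupp.embDomain_notin_range _ _ _ h0, add_zero]
        exact_mod_cast (ZMod.natCast_val (h.2 0)).trans (ZMod.cast_id 2 (h.2 0))
      | succ m =>
        rw [hφ3]
        exact Finsupp.comapDomain_apply _ _ _ _
  · -- finite
    refine ((Set.finite_singleton (0 : ℕ →₀ ℤ)).prod
      (Set.finite_range ⇑(Finsupp.singleAddHom (M := ZMod 2) 0))).subset ?_
    rintro ⟨a, b⟩ hab
    rw [SetLike.mem_coe, AddSubgroup.mem_prod] at hab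
    obtain ⟨ha, c, hc⟩ := hab
    exact ⟨by simpa using ha, c, hc⟩
  · -- generator
    intro F hF
    refine ⟨hF.toFinset.sup (fun g => g.2.support.sup id), ?_⟩
    intro g hg
    -- g.1 = 0
    have hfin : Finite F := hF.to_subtype
    have hord : IsOfFinAddOrder (⟨g, hg⟩ : F) := isOfFinAddOrder_of_finite _
    obtain ⟨n, hn, hng⟩ := hord.exists_nsmul_eq_zero
    have hng' : n • g = 0 := by
      have h := Subtype.ext_iff.mp hng
      rwa [AddSubmonoidClass.coe_nsmul] at h
    have h1 : g.1 = 0 := by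
      ext j
      have hthis := congrArg (fun x => x.1 j) hng'
      simp only [Prod.smul_fst, Finsupp.smul_apply, Prod.fst_zero, Finsupp.coe_zero,
        Pi.zero_apply, nsmul_eq_mul] at hthis
      rcases mul_eq_zero.mp hthis with h | h
      · exact absurd (by exact_mod_cast h) hn.ne'
      · simpa using h
    -- write g as sum of singles
    have hgrw : g = ∑ k ∈ g.2.support, ((0 : ℕ →₀ ℤ), Finsupp.single k (g.2 k)) := by
      have h2 : g.2 = ∑ k ∈ g.2.support, Finsupp.single k (g.2 k) := by
        conv_lhs => rw [← Finsupp.sum_single g.2]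
        rfl
      refine Prod.ext ?_ ?_
      · rw [Prod.fst_sum]; simpa using h1
      · rw [Prod.snd_sum]; exact h2.trans (by rfl)
    rw [hgrw]
    refine sum_mem fun k hk => ?_
    have hkle : k ≤ hF.toFinset.sup (fun g => g.2.support.sup id) := by
      refine le_trans ?_ (Finset.le_sup (by simpa using hg))
      exact Finset.le_sup (f := id) hk
    have : ((0 : ℕ →₀ ℤ), Finsupp.single k (g.2 k)) ∈ S.map (φ ^ k) := by
      refine ⟨(0, Finsupp.single 0 (g.2 k)), ?_, phi_single φ hφ1 hφ2 hφ3 k _⟩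
      exact ⟨by simp, ⟨g.2 k, rfl⟩⟩
    exact AddSubgroup.mem_iSup_of_mem k (AddSubgroup.mem_iSup_of_mem
      (Finset.mem_range.mpr (Nat.lt_succ_of_le hkle)) this)
end

section
/- Let G be a discrete torsion abelian group and φ: G → G an endomorphism, with Pontryagin dual endomorphism φ̂ of the compact group Ĝ. Then φ is algebraically positively expansive (there is a finite subgroup S ≤ G with ∑_{n∈ℕ} φ^n(S) = G) if and only if φ̂ is topologically positively expansive (there is a neighborhood U of the identity e in Ĝ with ⋂_{n∈ℕ} φ̂^{-n}(U) = {e}). -/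
open Multiplicative Set

namespace Stmt19Aux

noncomputable def qr : AddCircle (1:ℚ) →+ AddCircle (1:ℝ) :=
  QuotientAddGroup.map _ _ (Rat.castHom ℝ).toAddMonoidHom (by
    intro x hx
    obtain ⟨n, hn⟩ := AddSubgroup.mem_zmultiples_iff.mp hx
    exact AddSubgroup.mem_zmultiples_iff.mpr ⟨n, by push_cast [← hn]; simp⟩)

lemma qr_inj : Function.Injective qr := by
  intro x y h
  rw [← sub_eq_zero] at h ⊢
  rw [← map_sub] at h
  obtain ⟨q, hq⟩ := QuotientAddGroup.mk_surjective (x - y)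
  rw [← hq] at h ⊢
  rw [show qr (q : AddCircle (1:ℚ)) = ((q : ℝ) : AddCircle (1:ℝ)) from rfl,
    AddCircle.coe_eq_zero_iff] at h
  rw [AddCircle.coe_eq_zero_iff]
  obtain ⟨n, hn⟩ := h
  refine ⟨n, ?_⟩
  have : ((n • (1:ℚ) : ℚ) : ℝ) = (q : ℝ) := by simpa using hn
  exact_mod_cast this

variable {G : Type*} [AddCommGroup G] [TopologicalSpace G] [DiscreteTopology G]

lemma sep (H : AddSubgroup G) {a : G} (ha : a ∉ H) :
    ∃ χ : PontryaginDual (Multiplicative G),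
      (∀ h ∈ H, χ (ofAdd h) = 1) ∧ χ (ofAdd a) ≠ 1 := by
  have hne : (QuotientAddGroup.mk' H a) ≠ 0 := by
    simpa [QuotientAddGroup.eq_zero_iff] using ha
  obtain ⟨c, hc⟩ := CharacterModule.exists_character_apply_ne_zero_of_ne_zero hne
  set f : G →+ AddCircle (1:ℝ) :=
    qr.comp ((AddMonoidHomClass.toAddMonoidHom c).comp (QuotientAddGroup.mk' H)) with hf
  set χ₀ : AddChar G Circle := AddCircle.toCircle_addChar.compAddMonoidHom f with hχ₀
  refine ⟨⟨χ₀.toMonoidHom, continuous_of_discreteTopology⟩, ?_, ?_⟩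
  · intro h hh
    show χ₀ h = 1
    have : f h = 0 := by
      simp [hf, (QuotientAddGroup.eq_zero_iff h).mpr hh]
    simp [hχ₀, AddCircle.toCircle_addChar, this, AddCircle.toCircle_zero]
  · show χ₀ a ≠ 1
    have hfa : f a ≠ 0 := by
      simp only [hf, AddMonoidHom.coe_comp, Function.comp_apply]
      intro h0
      apply hc
      have h2 : (AddMonoidHomClass.toAddMonoidHom c) ((QuotientAddGroup.mk' H) a) = 0 :=
        qr_inj (by simpa using h0)
      simpa using h2
    intro h1
    apply hfa
    have := AddCircle.injective_toCircle (one_ne_zero (α := ℝ))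
    apply this
    rw [AddCircle.toCircle_zero]
    exact h1

def ann (F : Set G) : Set (PontryaginDual (Multiplicative G)) :=
  {χ | ∀ g ∈ F, χ (ofAdd g) = 1}

lemma roots_finite (n : ℕ) (hn : 0 < n) : {z : Circle | z ^ n = 1}.Finite := by
  have hsub : {z : Circle | z ^ n = 1} ⊆ (↑) ⁻¹' {w : ℂ | w ^ n = 1} := by
    intro z hz
    have hz' : z ^ n = 1 := hz
    have hp : ∀ m : ℕ, ((z ^ m : Circle) : ℂ) = (z : ℂ) ^ m := by
      intro m
      induction m with
      | zero => simp
      | succ k ih => rw [pow_succ, pow_succ, Circle.coe_mul, ih]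
    have : ((z : ℂ)) ^ n = 1 := by rw [← hp, hz', Circle.coe_one]
    exact this
  have hfin : {w : ℂ | w ^ n = 1}.Finite := by
    have : {w : ℂ | w ^ n = 1} ⊆ ((Polynomial.nthRoots n (1:ℂ)).toFinset : Set ℂ) := by
      intro w hw
      simp only [Multiset.mem_toFinset, Finset.mem_coe]
      exact (Polynomial.mem_nthRoots hn).mpr hw
    exact ((Polynomial.nthRoots n (1:ℂ)).toFinset.finite_toSet).subset this
  exact (hfin.preimage Circle.coe_injective.injOn).subset hsub

lemma ann_mem_nhds (hG : AddMonoid.IsTorsion G) {F : Set G} (hF : F.Finite) :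
    ann F ∈ nhds (1 : PontryaginDual (Multiplicative G)) := by
  classical
  set R : Set Circle := ⋃ g ∈ F, {z : Circle | z ^ (addOrderOf g) = 1} with hR
  have hRfin : R.Finite := hF.biUnion (fun g _ => roots_finite _ (hG g).addOrderOf_pos)
  set V : Set Circle := (R \ {1})ᶜ with hV
  have hVopen : IsOpen V := ((hRfin.diff).isClosed).isOpen_compl
  have h1V : (1:Circle) ∈ V := by simp [hV]
  set K : Set (Multiplicative G) := ofAdd '' F with hK
  have hKc : IsCompact K := (hF.image _).isCompact
  have hS : {f : C(Multiplicative G, Circle) | MapsTo f K V} ∈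
      nhds ((1 : PontryaginDual (Multiplicative G)) :
        C(Multiplicative G, Circle)) :=
    ContinuousMap.eventually_mapsTo hKc hVopen (fun x _ => h1V)
  have hnc := (ContinuousMonoidHom.isInducing_toContinuousMap (Multiplicative G) Circle).nhds_eq_comap
      (1 : PontryaginDual (Multiplicative G))
  have hmem : (ContinuousMonoidHom.toContinuousMap ⁻¹'
      {f : C(Multiplicative G, Circle) | MapsTo f K V}) ∈
      nhds (1 : PontryaginDual (Multiplicative G)) := by
    have h' : (ContinuousMonoidHom.toContinuousMap ⁻¹'
        {f : C(Multiplicative G, Circle) | MapsTo f K V} : Set (Multiplicative G →ₜ* Circle)) ∈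
        nhds (1 : Multiplicative G →ₜ* Circle) := by
      rw [(ContinuousMonoidHom.isInducing_toContinuousMap (Multiplicative G) Circle).nhds_eq_comap
        (1 : Multiplicative G →ₜ* Circle)]
      exact Filter.preimage_mem_comap hS
    exact h'
  refine Filter.mem_of_superset hmem ?_
  intro χ hχ g hg
  have hzV : χ (ofAdd g) ∈ V := hχ (mem_image_of_mem _ hg)
  have hzR : χ (ofAdd g) ∈ R := by
    refine mem_biUnion hg ?_
    show χ (ofAdd g) ^ addOrderOf g = 1
    rw [← map_pow, ← ofAdd_nsmul, addOrderOf_nsmul_eq_zero, ofAdd_zero, map_one]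
  by_contra hne
  exact hzV ⟨hzR, hne⟩

lemma exists_ann_subset {U : Set (PontryaginDual (Multiplicative G))}
    (hU : U ∈ nhds (1 : PontryaginDual (Multiplicative G))) :
    ∃ F : Set G, F.Finite ∧ ann F ⊆ U := by
  classical
  replace hU : (U : Set (Multiplicative G →ₜ* Circle)) ∈ nhds (1 : Multiplicative G →ₜ* Circle) := hU
  rw [(ContinuousMonoidHom.isInducing_toContinuousMap (Multiplicative G) Circle).nhds_eq_comap] at hU
  obtain ⟨T, hT, hTU⟩ := Filter.mem_comap.mp hU
  have hbasis := TopologicalSpace.isTopologicalBasis_of_subbasis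
    (ContinuousMap.compactOpen_eq (X := Multiplicative G) (Y := Circle))
  obtain ⟨t, ⟨fs, ⟨hfsfin, hfssub⟩, rfl⟩, h1t, htT⟩ := hbasis.mem_nhds_iff.mp hT
  have hchoice : ∀ s ∈ fs, ∃ K : Set (Multiplicative G), ∃ V : Set Circle,
      IsCompact K ∧ IsOpen V ∧ s = {f : C(Multiplicative G, Circle) | MapsTo f K V} := by
    intro s hsm
    obtain ⟨Ks, hKs, Vs, hVs, hsv⟩ := hfssub hsm
    exact ⟨Ks, Vs, hKs, hVs, hsv.symm⟩
  choose! K V hKc hVo hs using hchoice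
  refine ⟨toAdd '' (⋃ s ∈ fs, K s), (hfsfin.biUnion (fun s hsm =>
    ((hKc s hsm).finite (isDiscrete_iff_discreteTopology.mpr (by infer_instance))))).image _, ?_⟩
  intro χ hχ
  apply hTU
  apply htT
  intro s hsm
  rw [hs s hsm]
  intro x hx
  have h1 : (1 : Circle) ∈ V s := by
    have := h1t s hsm
    rw [hs s hsm] at this
    exact this hx
  have : χ x = 1 := by
    have hxm : toAdd x ∈ toAdd '' (⋃ s ∈ fs, K s) :=
      mem_image_of_mem _ (mem_biUnion hsm hx)
    have := hχ (toAdd x) hxm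
    simpa using this
  show χ x ∈ V s
  rw [this]
  exact h1

lemma iter_apply (φ : AddMonoid.End G)
    (ψ : PontryaginDual (Multiplicative G) → PontryaginDual (Multiplicative G))
    (hψ : ∀ (χ : PontryaginDual (Multiplicative G)) (g : G),
      ψ χ (Multiplicative.ofAdd g) = χ (Multiplicative.ofAdd (φ g))) :
    ∀ (n : ℕ) (χ : PontryaginDual (Multiplicative G)) (g : G),
      (ψ^[n] χ) (ofAdd g) = χ (ofAdd ((φ ^ n) g)) := by
  intro n
  induction n with
  | zero => intro χ g; simp
  | succ n ih =>
    intro χ g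
    rw [Function.iterate_succ_apply, ih (ψ χ) g, hψ χ ((φ ^ n) g)]
    congr 2
    rw [pow_succ']
    rfl

end Stmt19Aux

open Stmt19Aux

theorem stmt19 {G : Type*} [AddCommGroup G] [TopologicalSpace G] [DiscreteTopology G]
    (hG : AddMonoid.IsTorsion G) (φ : AddMonoid.End G)
    (ψ : PontryaginDual (Multiplicative G) → PontryaginDual (Multiplicative G))
    (hψ : ∀ (χ : PontryaginDual (Multiplicative G)) (g : G),
      ψ χ (Multiplicative.ofAdd g) = χ (Multiplicative.ofAdd (φ g))) :
    (∃ S : AddSubgroup G, (S : Set G).Finite ∧ (⨆ n : ℕ, S.map (φ ^ n)) = ⊤) ↔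
      ∃ U ∈ nhds (1 : PontryaginDual (Multiplicative G)),
        (⋂ n : ℕ, (ψ^[n]) ⁻¹' U) = {1} := by
  have hψ1 : ψ 1 = 1 := by
    apply DFunLike.ext
    intro x
    have := hψ 1 x.toAdd
    simpa using this
  constructor
  · rintro ⟨S, hSfin, hSsup⟩
    refine ⟨ann (S : Set G), ann_mem_nhds hG hSfin, ?_⟩
    apply Set.eq_singleton_iff_unique_mem.mpr
    constructor
    · refine Set.mem_iInter.mpr fun n => ?_
      simp only [Set.mem_preimage, Function.iterate_fixed hψ1 n]
      intro g _
      rfl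
    · intro χ hχ
      rw [Set.mem_iInter] at hχ
      set Kr : AddSubgroup G :=
        { carrier := {g | χ (ofAdd g) = 1}
          zero_mem' := by show χ (ofAdd (0:G)) = 1; rw [ofAdd_zero, map_one]
          add_mem' := by
            intro a b ha hb
            show χ (ofAdd (a + b)) = 1
            rw [ofAdd_add, map_mul, ha, hb, mul_one]
          neg_mem' := by
            intro a ha
            show χ (ofAdd (-a)) = 1
            rw [ofAdd_neg, map_inv, ha, inv_one] } with hKr
      have hle : (⨆ n : ℕ, S.map (φ ^ n)) ≤ Kr := by
        refine iSup_le fun n => ?_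
        rintro _ ⟨s, hs, rfl⟩
        show χ (ofAdd ((φ ^ n) s)) = 1
        rw [← iter_apply φ ψ hψ n χ s]
        exact hχ n s hs
      rw [hSsup] at hle
      apply DFunLike.ext
      intro x
      have : χ (ofAdd x.toAdd) = 1 := hle (AddSubgroup.mem_top _)
      simpa using this
  · rintro ⟨U, hU, hUint⟩
    obtain ⟨F, hFfin, hFsub⟩ := exists_ann_subset hU
    classical
    set S : AddSubgroup G := AddSubgroup.closure F with hS
    have hfg : AddGroup.FG S := by
      haveI := hFfin.to_subtype
      exact AddGroup.closure_finite_fg F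
    have htor : AddMonoid.IsTorsion S := by
      intro x
      obtain ⟨n, hn, hx⟩ := (isOfFinAddOrder_iff_nsmul_eq_zero).mp (hG (x : G))
      exact (isOfFinAddOrder_iff_nsmul_eq_zero).mpr
        ⟨n, hn, by ext; simpa using hx⟩
    have hfin : Finite S := AddCommGroup.finite_of_fg_torsion S htor
    have hSsetfin : (S : Set G).Finite := Set.finite_coe_iff.mp hfin
    refine ⟨S, hSsetfin, ?_⟩
    by_contra hne
    obtain ⟨a, ha⟩ : ∃ a : G, a ∉ (⨆ n : ℕ, S.map (φ ^ n)) := by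
      by_contra h
      push_neg at h
      exact hne (AddSubgroup.eq_top_iff' _ |>.mpr h)
    obtain ⟨χ, hχH, hχa⟩ := sep _ ha
    have hχmem : χ ∈ ⋂ n : ℕ, (ψ^[n]) ⁻¹' U := by
      refine Set.mem_iInter.mpr fun n => ?_
      refine hFsub ?_
      intro g hg
      rw [iter_apply φ ψ hψ n χ g]
      refine hχH _ ?_
      refine le_iSup (fun n : ℕ => S.map (φ ^ n)) n ?_
      exact ⟨g, AddSubgroup.subset_closure hg, rfl⟩
    rw [hUint] at hχmem
    rw [hχmem] at hχa
    exact hχa rfl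
end
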